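/- If {𝒜_k}_{k≥1} is a sequence of labyrinth patterns with widths m_k ≥ 3, then the limit set generated by the sequence of the corresponding complementary patterns {𝒜̄_k}_{k≥1}, where 𝒜̄_k = 𝒮_{m_k} \ 𝒜_k, is a totally disconnected set. -/

import Mathlib

open Set

namespace Labyrinth

/-- The closed square `S_{i,j,m} = [i/m,(i+1)/m] × [j/m,(j+1)/m]` of the `m × m` grid
on the unit square, indexed by `p = (i,j)`. -/
def cell (m : ℕ) (p : ℕ × ℕ) : Set (ℝ × ℝ) :=
  Icc ((p.1 : ℝ) / (m : ℝ)) (((p.1 : ℝ) + 1) / (m : ℝ)) ×ˢ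
    Icc ((p.2 : ℝ) / (m : ℝ)) (((p.2 : ℝ) + 1) / (m : ℝ))

/-- An `m`-pattern: a nonempty set of grid indices within the `m × m` grid. -/
def IsPattern (m : ℕ) (A : Set (ℕ × ℕ)) : Prop :=
  A.Nonempty ∧ ∀ p ∈ A, p.1 < m ∧ p.2 < m

/-- Two grid squares share a side. -/
def SideAdj (p q : ℕ × ℕ) : Prop :=
  (p.1 = q.1 ∧ (p.2 + 1 = q.2 ∨ q.2 + 1 = p.2)) ∨
  (p.2 = q.2 ∧ (p.1 + 1 = q.1 ∨ q.1 + 1 = p.1))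

/-- Two grid squares share a side or a corner. -/
def CornerAdj (p q : ℕ × ℕ) : Prop :=
  SideAdj p q ∨
  ((p.1 + 1 = q.1 ∨ q.1 + 1 = p.1) ∧ (p.2 + 1 = q.2 ∨ q.2 + 1 = p.2))

/-- The graph `𝒢(𝒜)` of a pattern: vertices are its squares, two squares being
adjacent iff they share a side. -/
def patternGraph (A : Set (ℕ × ℕ)) : SimpleGraph ↥A where
  Adj p q := SideAdj p.1 q.1
  symm := by
    refine ⟨?_⟩
    rintro ⟨p, hp⟩ ⟨q, hq⟩ h
    rcases h with ⟨h1, h2⟩ | ⟨h1, h2⟩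
    · exact Or.inl ⟨h1.symm, h2.symm⟩
    · exact Or.inr ⟨h1.symm, h2.symm⟩
  loopless := by
    refine ⟨?_⟩
    rintro ⟨p, hp⟩ h
    rcases h with ⟨h1, h2 | h2⟩ | ⟨h1, h2 | h2⟩ <;> omega

/-- The four sides of a square/pattern. -/
inductive Side | top | bottom | left | right
deriving DecidableEq

/-- `p` is an exit square of the `m`-pattern `A` on the given side. -/
def IsExitSq (m : ℕ) (A : Set (ℕ × ℕ)) : Side → ℕ × ℕ → Prop
  | .top, p => p ∈ A ∧ p.2 = m - 1 ∧ (p.1, 0) ∈ A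
  | .bottom, p => p ∈ A ∧ p.2 = 0 ∧ (p.1, m - 1) ∈ A
  | .left, p => p ∈ A ∧ p.1 = 0 ∧ (m - 1, p.2) ∈ A
  | .right, p => p ∈ A ∧ p.1 = m - 1 ∧ (0, p.2) ∈ A

/-- An `m × m`-labyrinth pattern: a nonempty `m`-pattern, `m ≥ 3`, whose graph is a tree,
with exactly one vertical and exactly one horizontal exit pair, and no two white squares
at diagonally opposite corners. -/
def IsLabyrinthPattern (m : ℕ) (A : Set (ℕ × ℕ)) : Prop :=
  3 ≤ m ∧ IsPattern m A ∧ (patternGraph A).IsTree ∧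
    (∃! i : ℕ, (i, m - 1) ∈ A ∧ (i, 0) ∈ A) ∧
    (∃! j : ℕ, (0, j) ∈ A ∧ (m - 1, j) ∈ A) ∧
    ((0, 0) ∈ A → (m - 1, m - 1) ∉ A) ∧
    ((m - 1, 0) ∈ A → (0, m - 1) ∉ A)

/-- A wild labyrinth pattern: the graph is merely connected, and there is at least one
vertical and at least one horizontal exit pair. -/
def IsWildLabyrinthPattern (m : ℕ) (A : Set (ℕ × ℕ)) : Prop :=
  3 ≤ m ∧ IsPattern m A ∧ (patternGraph A).Connected ∧
    (∃ i : ℕ, (i, m - 1) ∈ A ∧ (i, 0) ∈ A) ∧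
    (∃ j : ℕ, (0, j) ∈ A ∧ (m - 1, j) ∈ A) ∧
    ((0, 0) ∈ A → (m - 1, m - 1) ∉ A) ∧
    ((m - 1, 0) ∈ A → (0, m - 1) ∉ A)

/-- One substitution step: place a copy of the pattern `A'` (of width `m'`) into each
white square of `W`. -/
def subst (m' : ℕ) (A' W : Set (ℕ × ℕ)) : Set (ℕ × ℕ) :=
  {q | ∃ p ∈ W, ∃ r ∈ A', q = (p.1 * m' + r.1, p.2 * m' + r.2)}

/-- The white squares `𝒲_n` of level `n`; `whites m A n` is the paper's `𝒲_n`, where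
`A k` is the paper's pattern `𝒜_{k+1}` of width `m k = m_{k+1}`; level `0` is the whole
unit square. -/
def whites (m : ℕ → ℕ) (A : ℕ → Set (ℕ × ℕ)) : ℕ → Set (ℕ × ℕ)
  | 0 => {(0, 0)}
  | n + 1 => subst (m n) (A n) (whites m A n)

/-- `m(n) = m_1 ⋯ m_n`. -/
def mProd (m : ℕ → ℕ) (n : ℕ) : ℕ := ∏ k ∈ Finset.range n, m k

/-- The black squares `ℬ_n` of level `n`. -/
def blacks (m : ℕ → ℕ) (A : ℕ → Set (ℕ × ℕ)) (n : ℕ) : Set (ℕ × ℕ) :=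
  {p : ℕ × ℕ | p.1 < mProd m n ∧ p.2 < mProd m n} \ whites m A n

/-- A border square of the `m × m` grid. -/
def IsBorder (m : ℕ) (p : ℕ × ℕ) : Prop :=
  p.1 = 0 ∨ p.2 = 0 ∨ p.1 = m - 1 ∨ p.2 = m - 1

/-- `L_n`, the union of the white squares of level `n`. -/
def levelSet (m : ℕ → ℕ) (A : ℕ → Set (ℕ × ℕ)) (n : ℕ) : Set (ℝ × ℝ) :=
  ⋃ p ∈ whites m A n, cell (mProd m n) p

/-- `L_∞ = ⋂_{n ≥ 1} L_n` (the term `n = 0` is the whole unit square). -/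
def limitSet (m : ℕ → ℕ) (A : ℕ → Set (ℕ × ℕ)) : Set (ℝ × ℝ) :=
  ⋂ n, levelSet m A n

def unitSquare : Set (ℝ × ℝ) := Icc (0 : ℝ) 1 ×ˢ Icc (0 : ℝ) 1

/-- A path in a graph (with adjacency `Adj`, within the vertex set `A`)
from `u` to `v`: a nonempty list of distinct, consecutively adjacent squares of `A`,
starting at `u` and ending at `v`. -/
def IsPathIn (Adj : ℕ × ℕ → ℕ × ℕ → Prop) (A : Set (ℕ × ℕ))
    (l : List (ℕ × ℕ)) (u v : ℕ × ℕ) : Prop :=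
  l ≠ [] ∧ l.Nodup ∧ l.Chain' Adj ∧ (∀ p ∈ l, p ∈ A) ∧
    l.head? = some u ∧ l.getLast? = some v

/-- `s` is an arc between `a` and `b`: a homeomorphic image of `[0,1]`
with endpoints `a` and `b`. -/
def IsArc (s : Set (ℝ × ℝ)) (a b : ℝ × ℝ) : Prop :=
  ∃ f : ℝ → ℝ × ℝ, ContinuousOn f (Icc 0 1) ∧ InjOn f (Icc 0 1) ∧
    f '' Icc 0 1 = s ∧ f 0 = a ∧ f 1 = b

/-- `e` is the exit point of `L_∞` of the given type: for every `n ≥ 1` it lies in the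
exit square of that type of `𝒲_n`. -/
def IsExitPoint (m : ℕ → ℕ) (A : ℕ → Set (ℕ × ℕ)) (s : Side) (e : ℝ × ℝ) : Prop :=
  ∀ n, 1 ≤ n → ∃ p, IsExitSq (mProd m n) (whites m A n) s p ∧ e ∈ cell (mProd m n) p

/-- The (closed) edge of the grid square `p` of the `m × m` grid on the given side. -/
def cellEdge (m : ℕ) (p : ℕ × ℕ) : Side → Set (ℝ × ℝ)
  | .top => Icc ((p.1 : ℝ) / (m : ℝ)) (((p.1 : ℝ) + 1) / (m : ℝ)) ×ˢ {((p.2 : ℝ) + 1) / (m : ℝ)}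
  | .bottom => Icc ((p.1 : ℝ) / (m : ℝ)) (((p.1 : ℝ) + 1) / (m : ℝ)) ×ˢ {(p.2 : ℝ) / (m : ℝ)}
  | .left => {(p.1 : ℝ) / (m : ℝ)} ×ˢ Icc ((p.2 : ℝ) / (m : ℝ)) (((p.2 : ℝ) + 1) / (m : ℝ))
  | .right => {((p.1 : ℝ) + 1) / (m : ℝ)} ×ˢ Icc ((p.2 : ℝ) / (m : ℝ)) (((p.2 : ℝ) + 1) / (m : ℝ))

/-- Directions in the grid. -/
inductive Dir | up | down | left | right
deriving DecidableEq

/-- `stepDir p q d`: the square `q` is the neighbour of `p` in direction `d`. -/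
def stepDir (p q : ℕ × ℕ) : Dir → Prop
  | .up => q.1 = p.1 ∧ q.2 = p.2 + 1
  | .down => q.1 = p.1 ∧ p.2 = q.2 + 1
  | .left => q.2 = p.2 ∧ p.1 = q.1 + 1
  | .right => q.2 = p.2 ∧ q.1 = p.1 + 1

/-- The outward direction through a given side. -/
def outDir : Side → Dir
  | .top => .up
  | .bottom => .down
  | .left => .left
  | .right => .right

def sideOfDir : Dir → Side
  | .up => .top
  | .down => .bottom
  | .left => .left
  | .right => .right

/-- The six types `A, B, C, D, E, F` of paths (and of squares within a path). -/
inductive PTy | A | B | C | D | E | F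
deriving DecidableEq

instance : Fintype PTy := ⟨⟨{.A, .B, .C, .D, .E, .F}, by decide⟩, fun x => by cases x <;> decide⟩

/-- The exit at which the `x`-path starts: `A`: top→bottom, `B`: left→right,
`C`: top→right, `D`: right→bottom, `E`: bottom→left, `F`: left→top. -/
def startSide : PTy → Side
  | .A => .top
  | .B => .left
  | .C => .top
  | .D => .right
  | .E => .bottom
  | .F => .left

/-- The exit at which the `x`-path ends. -/
def endSide : PTy → Side
  | .A => .bottom
  | .B => .right
  | .C => .right
  | .D => .bottom
  | .E => .left
  | .F => .top

/-- The two neighbour directions characterising a square of each type. -/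
def ptyDirPair : PTy → Dir × Dir
  | .A => (.up, .down)
  | .B => (.left, .right)
  | .C => (.up, .right)
  | .D => (.right, .down)
  | .E => (.down, .left)
  | .F => (.left, .up)

def ptyDirs (τ : PTy) : Set Dir := {(ptyDirPair τ).1, (ptyDirPair τ).2}

/-- The set of directions from the `i`-th square of the path `l` towards its neighbours
within the path, where the first and last squares (exit squares) are regarded as having
an additional neighbour outside the unit square, in directions `dstart`, `dend`
respectively. -/
def pathDirs (l : List (ℕ × ℕ)) (dstart dend : Dir) (i : ℕ) : Set Dir :=
  {d | (∃ p q, l[i]? = some p ∧ l[i - 1]? = some q ∧ 0 < i ∧ stepDir p q d)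
    ∨ (∃ p q, l[i]? = some p ∧ l[i + 1]? = some q ∧ stepDir p q d)
    ∨ (i = 0 ∧ d = dstart)
    ∨ (i + 1 = l.length ∧ d = dend)}

/-- The number of `τ`-squares of the path `l` (with outward exit directions
`dstart`, `dend`). -/
noncomputable def countTy (l : List (ℕ × ℕ)) (dstart dend : Dir) (τ : PTy) : ℕ :=
  {i | i < l.length ∧ pathDirs l dstart dend i = ptyDirs τ}.ncard

/-- `M(n) = M_1 ⋅ M_2 ⋅ ⋯ ⋅ M_n`. -/
def matProd (M : ℕ → Matrix PTy PTy ℕ) (n : ℕ) : Matrix PTy PTy ℕ :=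
  ((List.range n).map M).prod

/-- A simple closed curve: a subspace homeomorphic to the circle. -/
def IsSimpleClosedCurve (s : Set (ℝ × ℝ)) : Prop :=
  Nonempty (↥s ≃ₜ AddCircle (1 : ℝ))

/-- The number of `δ`-mesh squares meeting `E`. -/
noncomputable def meshCount (δ : ℝ) (E : Set (ℝ × ℝ)) : ℕ :=
  {q : ℤ × ℤ | (E ∩ (Icc ((q.1 : ℝ) * δ) (((q.1 : ℝ) + 1) * δ) ×ˢ
      Icc ((q.2 : ℝ) * δ) (((q.2 : ℝ) + 1) * δ))).Nonempty}.ncard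

/-- The lower box-counting dimension of `E ⊆ ℝ²`. -/
noncomputable def lowerBoxDim (E : Set (ℝ × ℝ)) : ℝ :=
  Filter.liminf (fun δ : ℝ => Real.log (meshCount δ E) / (-Real.log δ)) (nhdsWithin 0 (Ioi 0))

/-- The upper box-counting dimension of `E ⊆ ℝ²`. -/
noncomputable def upperBoxDim (E : Set (ℝ × ℝ)) : ℝ :=
  Filter.limsup (fun δ : ℝ => Real.log (meshCount δ E) / (-Real.log δ)) (nhdsWithin 0 (Ioi 0))

end Labyrinth


namespace LabPf

open Classical in
/-- Indicator of a proposition in `ZMod 2`. -/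
noncomputable def b2z (P : Prop) : ZMod 2 := if P then 1 else 0

lemma b2z_of (P : Prop) (h : P) : b2z P = 1 := by simp [b2z, h]
lemma b2z_not (P : Prop) (h : ¬ P) : b2z P = 0 := by simp [b2z, h]

lemma b2z_add (P Q : Prop) : b2z P + b2z Q = b2z (¬ (P ↔ Q)) := by
  by_cases hP : P <;> by_cases hQ : Q <;> simp [b2z, hP, hQ] <;> decide

lemma b2z_congr (P Q : Prop) (h : P ↔ Q) : b2z P = b2z Q := by
  by_cases hP : P
  · rw [b2z_of _ hP, b2z_of _ (h.mp hP)]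
  · rw [b2z_not _ hP, b2z_not _ fun hq => hP (h.mpr hq)]

/-- The list of consecutive pairs (edges) of a vertex list. -/
def edges (L : List (ℝ × ℝ)) : List ((ℝ × ℝ) × (ℝ × ℝ)) := L.zip L.tail

lemma edges_cons_cons (p q : ℝ × ℝ) (L : List (ℝ × ℝ)) :
    edges (p :: q :: L) = (p, q) :: edges (q :: L) := rfl

lemma mem_of_mem_edges {e : (ℝ × ℝ) × (ℝ × ℝ)} {L : List (ℝ × ℝ)} (h : e ∈ edges L) :
    e.1 ∈ L ∧ e.2 ∈ L := by
  obtain ⟨h1, h2⟩ := List.of_mem_zip h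
  exact ⟨h1, List.mem_of_mem_tail h2⟩

lemma chain'_edges {R : (ℝ × ℝ) → (ℝ × ℝ) → Prop} {L : List (ℝ × ℝ)}
    (h : L.Chain' R) {e : (ℝ × ℝ) × (ℝ × ℝ)} (he : e ∈ edges L) : R e.1 e.2 := by
  induction L with
  | nil => simp [edges] at he
  | cons p L ih =>
    cases L with
    | nil => simp [edges] at he
    | cons q L' =>
      rw [edges_cons_cons] at he
      rcases List.mem_cons.mp he with h0 | h1
      · subst h0; exact (List.isChain_cons_cons.mp h).1
      · exact ih (List.isChain_cons_cons.mp h).2 h1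

lemma sum_map_add {α : Type*} (l : List α) (f g : α → ZMod 2) :
    (l.map f).sum + (l.map g).sum = (l.map fun x => f x + g x).sum := by
  induction l with
  | nil => simp
  | cons x l ih => simp only [List.map_cons, List.sum_cons]; rw [← ih]; ring

lemma add_self_zmod2 : ∀ a : ZMod 2, a + a = 0 := by decide

lemma sum_edges_telescope (f : (ℝ × ℝ) → ZMod 2) :
    ∀ (L : List (ℝ × ℝ)) (x₀ : ℝ × ℝ),
      ((edges (x₀ :: L)).map fun e => f e.1 + f e.2).sum = f x₀ + f (L.getLast?.getD x₀)
  | [], x₀ => by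
      simp [edges]
      rw [add_self_zmod2]
  | y :: L', x₀ => by
      rw [edges_cons_cons]
      simp only [List.map_cons, List.sum_cons]
      rw [sum_edges_telescope f L' y]
      simp only [List.getLast?_cons]
      have : (L'.getLast?.getD y :: []).headI = L'.getLast?.getD y := rfl
      set c := L'.getLast?.getD y with hc
      have h0 : (Option.some c).getD x₀ = c := rfl
      rw [h0]
      have : f x₀ + f y + (f y + f c) = f x₀ + f c + (f y + f y) := by ring
      rw [this, add_self_zmod2, add_zero]

/-- An axis-aligned pair. -/
def Aligned (e : (ℝ × ℝ) × (ℝ × ℝ)) : Prop := e.1.1 = e.2.1 ∨ e.1.2 = e.2.2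

/-- Horizontal-ray crossing count (mod 2). -/
noncomputable def Rcnt (L : List (ℝ × ℝ)) (z : ℝ × ℝ) : ZMod 2 :=
  ((edges L).map fun e => b2z (¬ ((e.1.2 ≤ z.2) ↔ (e.2.2 ≤ z.2)) ∧ z.1 < e.1.1)).sum

/-- Vertical-ray crossing count (mod 2). -/
noncomputable def Ucnt (L : List (ℝ × ℝ)) (z : ℝ × ℝ) : ZMod 2 :=
  ((edges L).map fun e => b2z (¬ ((z.1 < e.1.1) ↔ (z.1 < e.2.1)) ∧ e.1.2 ≤ z.2)).sum

lemma edge_identity (z : ℝ × ℝ) (e : (ℝ × ℝ) × (ℝ × ℝ)) (hal : Aligned e) :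
    b2z (¬ ((e.1.2 ≤ z.2) ↔ (e.2.2 ≤ z.2)) ∧ z.1 < e.1.1)
      + b2z (¬ ((z.1 < e.1.1) ↔ (z.1 < e.2.1)) ∧ e.1.2 ≤ z.2)
      = b2z (e.1.2 ≤ z.2 ∧ z.1 < e.1.1) + b2z (e.2.2 ≤ z.2 ∧ z.1 < e.2.1) := by
  rcases hal with hx | hy
  · rw [hx]
    by_cases h1 : e.1.2 ≤ z.2 <;> by_cases h2 : e.2.2 ≤ z.2 <;>
      by_cases h3 : z.1 < e.2.1 <;> simp [b2z, h1, h2, h3] <;> decide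
  · rw [hy]
    by_cases h1 : e.2.2 ≤ z.2 <;> by_cases h2 : z.1 < e.1.1 <;>
      by_cases h3 : z.1 < e.2.1 <;> simp [b2z, h1, h2, h3] <;> decide

lemma Rcnt_eq_Ucnt {L : List (ℝ × ℝ)} (z : ℝ × ℝ)
    (hcyc : L.head? = L.getLast?) (hal : ∀ e ∈ edges L, Aligned e) :
    Rcnt L z = Ucnt L z := by
  cases L with
  | nil => rfl
  | cons x₀ L' =>
    have hsum : Rcnt (x₀ :: L') z + Ucnt (x₀ :: L') z = 0 := by
      rw [Rcnt, Ucnt, sum_map_add]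
      have : ((edges (x₀ :: L')).map fun e =>
          b2z (¬ ((e.1.2 ≤ z.2) ↔ (e.2.2 ≤ z.2)) ∧ z.1 < e.1.1)
            + b2z (¬ ((z.1 < e.1.1) ↔ (z.1 < e.2.1)) ∧ e.1.2 ≤ z.2)).sum
          = ((edges (x₀ :: L')).map fun e =>
            b2z (e.1.2 ≤ z.2 ∧ z.1 < e.1.1) + b2z (e.2.2 ≤ z.2 ∧ z.1 < e.2.1)).sum := by
        apply congrArg
        apply List.map_congr_left
        intro e he
        exact edge_identity z e (hal e he)
      rw [this, sum_edges_telescope (fun p => b2z (p.2 ≤ z.2 ∧ z.1 < p.1)) L' x₀]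
      have hlast : L'.getLast?.getD x₀ = x₀ := by
        have h := hcyc
        rw [List.head?_cons, List.getLast?_cons] at h
        exact (Option.some_inj.mp h).symm
      rw [hlast]
      exact add_self_zmod2 _
    have := add_self_zmod2 (Ucnt (x₀ :: L') z)
    calc Rcnt (x₀ :: L') z = Rcnt (x₀ :: L') z + (Ucnt (x₀ :: L') z + Ucnt (x₀ :: L') z) := by
          rw [this, add_zero]
      _ = (Rcnt (x₀ :: L') z + Ucnt (x₀ :: L') z) + Ucnt (x₀ :: L') z := by ring
      _ = Ucnt (x₀ :: L') z := by rw [hsum, zero_add]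

lemma convex_bound {u v x y : ℝ} (hu : 0 ≤ u) (hv : 0 ≤ v) (huv : u + v = 1) :
    min x y ≤ u * x + v * y ∧ u * x + v * y ≤ max x y := by
  have e1 : u * (x ⊓ y) ≤ u * x := mul_le_mul_of_nonneg_left (min_le_left x y) hu
  have e2 : v * (x ⊓ y) ≤ v * y := mul_le_mul_of_nonneg_left (min_le_right x y) hv
  have e3 : u * (x ⊓ y) + v * (x ⊓ y) = x ⊓ y := by rw [← add_mul, huv, one_mul]
  have f1 : u * x ≤ u * (x ⊔ y) := mul_le_mul_of_nonneg_left (le_max_left x y) hu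
  have f2 : v * y ≤ v * (x ⊔ y) := mul_le_mul_of_nonneg_left (le_max_right x y) hv
  have f3 : u * (x ⊔ y) + v * (x ⊔ y) = x ⊔ y := by rw [← add_mul, huv, one_mul]
  constructor <;> linarith

lemma seg_bounds {p q z : ℝ × ℝ} (h : z ∈ segment ℝ p q) :
    (min p.1 q.1 ≤ z.1 ∧ z.1 ≤ max p.1 q.1) ∧ (min p.2 q.2 ≤ z.2 ∧ z.2 ≤ max p.2 q.2) := by
  obtain ⟨u, v, hu, hv, huv, rfl⟩ := h
  have h1 : (u • p + v • q).1 = u * p.1 + v * q.1 := by simp [Prod.smul_def, smul_eq_mul]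
  have h2 : (u • p + v • q).2 = u * p.2 + v * q.2 := by simp [Prod.smul_def, smul_eq_mul]
  rw [h1, h2]
  exact ⟨convex_bound hu hv huv, convex_bound hu hv huv⟩

lemma mem_seg_vert_aux {p q : ℝ × ℝ} (hx : p.1 = q.1) {y : ℝ} (hle : p.2 ≤ q.2)
    (h1 : p.2 ≤ y) (h2 : y ≤ q.2) : ((p.1 : ℝ), y) ∈ segment ℝ p q := by
  rcases eq_or_lt_of_le hle with heq | hlt
  · have : y = p.2 := le_antisymm (heq ▸ h2) h1
    have : (p.1, y) = p := by rw [this]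
    rw [this]; exact left_mem_segment ℝ p q
  · rw [segment_eq_image]
    refine ⟨(y - p.2) / (q.2 - p.2), ⟨div_nonneg (by linarith) (by linarith),
      (div_le_one (by linarith)).mpr (by linarith)⟩, ?_⟩
    have hd : q.2 - p.2 ≠ 0 := by linarith
    apply Prod.ext
    · simp [Prod.smul_def, smul_eq_mul, hx]; ring
    · simp [Prod.smul_def, smul_eq_mul]
      field_simp
      ring

lemma mem_seg_vert {p q : ℝ × ℝ} (hx : p.1 = q.1) {y : ℝ}
    (h1 : min p.2 q.2 ≤ y) (h2 : y ≤ max p.2 q.2) : ((p.1 : ℝ), y) ∈ segment ℝ p q := by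
  rcases le_total p.2 q.2 with h | h
  · exact mem_seg_vert_aux hx h (by rwa [min_eq_left h] at h1) (by rwa [max_eq_right h] at h2)
  · rw [segment_symm]
    have := mem_seg_vert_aux (p := q) (q := p) (y := y) hx.symm h
      (by rwa [min_eq_right h] at h1) (by rwa [max_eq_left h] at h2)
    rw [hx]
    exact this

lemma mem_seg_horiz {p q : ℝ × ℝ} (hy : p.2 = q.2) {x : ℝ}
    (h1 : min p.1 q.1 ≤ x) (h2 : x ≤ max p.1 q.1) : ((x : ℝ), p.2) ∈ segment ℝ p q := by
  have key : ∀ {p q : ℝ × ℝ}, p.2 = q.2 → p.1 ≤ q.1 → p.1 ≤ x → x ≤ q.1 →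
      ((x : ℝ), p.2) ∈ segment ℝ p q := by
    intro p q hy hle ha hb
    rcases eq_or_lt_of_le hle with heq | hlt
    · have : x = p.1 := le_antisymm (heq ▸ hb) ha
      have : (x, p.2) = p := by rw [this]
      rw [this]; exact left_mem_segment ℝ p q
    · rw [segment_eq_image]
      refine ⟨(x - p.1) / (q.1 - p.1), ⟨div_nonneg (by linarith) (by linarith),
        (div_le_one (by linarith)).mpr (by linarith)⟩, ?_⟩
      have hd : q.1 - p.1 ≠ 0 := by linarith
      apply Prod.ext
      · simp [Prod.smul_def, smul_eq_mul]
        field_simp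
        ring
      · simp [Prod.smul_def, smul_eq_mul, hy]; ring
  rcases le_total p.1 q.1 with h | h
  · exact key hy h (by rwa [min_eq_left h] at h1) (by rwa [max_eq_right h] at h2)
  · rw [segment_symm]
    rw [hy]
    exact key hy.symm h (by rwa [min_eq_right h] at h1) (by rwa [max_eq_left h] at h2)

lemma dist_fst_le' (z w : ℝ × ℝ) : |z.1 - w.1| ≤ dist z w := by
  rw [Prod.dist_eq]
  exact le_trans (le_of_eq (Real.dist_eq z.1 w.1).symm) (le_max_left _ _)

lemma dist_snd_le' (z w : ℝ × ℝ) : |z.2 - w.2| ≤ dist z w := by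
  rw [Prod.dist_eq]
  exact le_trans (le_of_eq (Real.dist_eq z.2 w.2).symm) (le_max_right _ _)

/-- Local constancy of the crossing parity off the curve. -/
lemma Rcnt_locally_const {L : List (ℝ × ℝ)}
    (hcyc : L.head? = L.getLast?) (hal : ∀ e ∈ edges L, Aligned e)
    {z w : ℝ × ℝ} {ε : ℝ}
    (hfar : ∀ e ∈ edges L, ∀ ζ ∈ segment ℝ e.1 e.2, ε ≤ dist z ζ)
    (hw : dist z w < ε) : Rcnt L w = Rcnt L z := by
  set zm : ℝ × ℝ := (w.1, z.2) with hzm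
  have hx1 : |z.1 - w.1| < ε := lt_of_le_of_lt (dist_fst_le' z w) hw
  have hy1 : |z.2 - w.2| < ε := lt_of_le_of_lt (dist_snd_le' z w) hw
  -- Step 1 : Rcnt at zm equals Rcnt at z
  have step1 : Rcnt L zm = Rcnt L z := by
    unfold Rcnt
    apply congrArg
    apply List.map_congr_left
    intro e he
    apply b2z_congr
    have hzm2 : zm.2 = z.2 := rfl
    rw [hzm2]
    constructor
    · rintro ⟨hflip, hxlt⟩
      refine ⟨hflip, ?_⟩
      by_contra hzlt
      push_neg at hzlt
      -- e.1.1 lies between z.1 and w.1 : contradiction with hfar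
      have hvert : e.1.1 = e.2.1 := by
        rcases hal e he with h | h
        · exact h
        · exact absurd (iff_of_eq (congrArg (· ≤ z.2) h)) hflip
      have hbet : min e.1.2 e.2.2 ≤ z.2 ∧ z.2 ≤ max e.1.2 e.2.2 := by
        by_cases h1 : e.1.2 ≤ z.2
        · have h2 : ¬ e.2.2 ≤ z.2 := fun h2 => hflip (iff_of_true h1 h2)
          push_neg at h2
          exact ⟨le_trans (min_le_left _ _) h1, le_trans h2.le (le_max_right _ _)⟩
        · have h2 : e.2.2 ≤ z.2 := by
            by_contra h2
            exact hflip (iff_of_false h1 h2)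
          exact ⟨le_trans (min_le_right _ _) h2, le_trans (not_le.mp h1).le (le_max_left _ _)⟩
      have hmem : ((e.1.1 : ℝ), z.2) ∈ segment ℝ e.1 e.2 := mem_seg_vert hvert hbet.1 hbet.2
      have hd := hfar e he _ hmem
      have : dist z (e.1.1, z.2) = |z.1 - e.1.1| := by
        rw [Prod.dist_eq]
        simp [Real.dist_eq]
      rw [this] at hd
      have : |z.1 - e.1.1| < ε := by
        rcases abs_lt.mp hx1 with ⟨ha, hb⟩
        rw [abs_lt]
        constructor <;> simp only [hzm] at hxlt <;> nlinarith
      linarith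
    · rintro ⟨hflip, hxlt⟩
      refine ⟨hflip, ?_⟩
      by_contra hzlt
      push_neg at hzlt
      have hvert : e.1.1 = e.2.1 := by
        rcases hal e he with h | h
        · exact h
        · exact absurd (iff_of_eq (congrArg (· ≤ z.2) h)) hflip
      have hbet : min e.1.2 e.2.2 ≤ z.2 ∧ z.2 ≤ max e.1.2 e.2.2 := by
        by_cases h1 : e.1.2 ≤ z.2
        · have h2 : ¬ e.2.2 ≤ z.2 := fun h2 => hflip (iff_of_true h1 h2)
          push_neg at h2
          exact ⟨le_trans (min_le_left _ _) h1, le_trans h2.le (le_max_right _ _)⟩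
        · have h2 : e.2.2 ≤ z.2 := by
            by_contra h2
            exact hflip (iff_of_false h1 h2)
          exact ⟨le_trans (min_le_right _ _) h2, le_trans (not_le.mp h1).le (le_max_left _ _)⟩
      have hmem : ((e.1.1 : ℝ), z.2) ∈ segment ℝ e.1 e.2 := mem_seg_vert hvert hbet.1 hbet.2
      have hd := hfar e he _ hmem
      have : dist z (e.1.1, z.2) = |z.1 - e.1.1| := by
        rw [Prod.dist_eq]
        simp [Real.dist_eq]
      rw [this] at hd
      have : |z.1 - e.1.1| < ε := by
        rcases abs_lt.mp hx1 with ⟨ha, hb⟩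
        rw [abs_lt]
        constructor <;> simp only [hzm] at hzlt <;> nlinarith
      linarith
  -- Step 2 : Ucnt at zm equals Ucnt at w
  have step2 : Ucnt L zm = Ucnt L w := by
    unfold Ucnt
    apply congrArg
    apply List.map_congr_left
    intro e he
    apply b2z_congr
    have hzm1 : zm.1 = w.1 := rfl
    rw [hzm1]
    have main : ∀ h : ¬ ((w.1 < e.1.1) ↔ (w.1 < e.2.1)), (zm.2 ≤ e.1.2 → False) → True := by
      intro _ _; trivial
    constructor
    · rintro ⟨hflip, ht⟩
      refine ⟨hflip, ?_⟩
      by_contra hwt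
      push_neg at hwt
      have hhoriz : e.1.2 = e.2.2 := by
        rcases hal e he with h | h
        · exact absurd (iff_of_eq (congrArg (w.1 < ·) h)) hflip
        · exact h
      have hbet : min e.1.1 e.2.1 ≤ w.1 ∧ w.1 ≤ max e.1.1 e.2.1 := by
        by_cases h1 : w.1 < e.1.1
        · have h2 : ¬ w.1 < e.2.1 := fun h2 => hflip (iff_of_true h1 h2)
          push_neg at h2
          exact ⟨le_trans (min_le_right _ _) h2, le_trans h1.le (le_max_left _ _)⟩
        · have h2 : w.1 < e.2.1 := by
            by_contra h2
            exact hflip (iff_of_false h1 h2)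
          push_neg at h1
          exact ⟨le_trans (min_le_left _ _) h1, le_trans h2.le (le_max_right _ _)⟩
      have hmem : ((w.1 : ℝ), e.1.2) ∈ segment ℝ e.1 e.2 := mem_seg_horiz hhoriz hbet.1 hbet.2
      have hd := hfar e he _ hmem
      have hdist : dist z (w.1, e.1.2) ≤ max (|z.1 - w.1|) (|z.2 - e.1.2|) := by
        rw [Prod.dist_eq]
        simp [Real.dist_eq]
      have h12 : |z.2 - e.1.2| < ε := by
        rcases abs_lt.mp hy1 with ⟨ha, hb⟩
        rw [abs_lt]
        have ht' : e.1.2 ≤ z.2 := ht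
        constructor <;> nlinarith
      have : dist z (w.1, e.1.2) < ε := lt_of_le_of_lt hdist (max_lt hx1 h12)
      linarith
    · rintro ⟨hflip, ht⟩
      refine ⟨hflip, ?_⟩
      by_contra hwt
      push_neg at hwt
      have hhoriz : e.1.2 = e.2.2 := by
        rcases hal e he with h | h
        · exact absurd (iff_of_eq (congrArg (w.1 < ·) h)) hflip
        · exact h
      have hbet : min e.1.1 e.2.1 ≤ w.1 ∧ w.1 ≤ max e.1.1 e.2.1 := by
        by_cases h1 : w.1 < e.1.1
        · have h2 : ¬ w.1 < e.2.1 := fun h2 => hflip (iff_of_true h1 h2)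
          push_neg at h2
          exact ⟨le_trans (min_le_right _ _) h2, le_trans h1.le (le_max_left _ _)⟩
        · have h2 : w.1 < e.2.1 := by
            by_contra h2
            exact hflip (iff_of_false h1 h2)
          push_neg at h1
          exact ⟨le_trans (min_le_left _ _) h1, le_trans h2.le (le_max_right _ _)⟩
      have hmem : ((w.1 : ℝ), e.1.2) ∈ segment ℝ e.1 e.2 := mem_seg_horiz hhoriz hbet.1 hbet.2
      have hd := hfar e he _ hmem
      have hdist : dist z (w.1, e.1.2) ≤ max (|z.1 - w.1|) (|z.2 - e.1.2|) := by
        rw [Prod.dist_eq]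
        simp [Real.dist_eq]
      have h12 : |z.2 - e.1.2| < ε := by
        rcases abs_lt.mp hy1 with ⟨ha, hb⟩
        rw [abs_lt]
        have ht' : e.1.2 ≤ w.2 := ht
        constructor <;> nlinarith
      have : dist z (w.1, e.1.2) < ε := lt_of_le_of_lt hdist (max_lt hx1 h12)
      linarith
  calc Rcnt L w = Ucnt L w := Rcnt_eq_Ucnt w hcyc hal
    _ = Ucnt L zm := step2.symm
    _ = Rcnt L zm := (Rcnt_eq_Ucnt zm hcyc hal).symm
    _ = Rcnt L z := step1

/-- The union of the closed edges of the polyline. -/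
def curveSet (L : List (ℝ × ℝ)) : Set (ℝ × ℝ) := {z | ∃ e ∈ edges L, z ∈ segment ℝ e.1 e.2}

lemma isClosed_seg (p q : ℝ × ℝ) : IsClosed (segment ℝ p q) := by
  rw [segment_eq_image]
  have hc : Continuous fun θ : ℝ => (1 - θ) • p + θ • q := by
    apply Continuous.add
    · exact (continuous_const.sub continuous_id).smul continuous_const
    · exact continuous_id.smul continuous_const
  exact (isCompact_Icc.image hc).isClosed

lemma isClosed_curveSet (L : List (ℝ × ℝ)) : IsClosed (curveSet L) := by
  have : curveSet L = ⋃ e ∈ {e | e ∈ edges L}, segment ℝ e.1 e.2 := by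
    ext z; simp [curveSet]
  rw [this]
  exact Set.Finite.isClosed_biUnion (List.finite_toSet _) fun e _ => isClosed_seg e.1 e.2

lemma parity_region_open (L : List (ℝ × ℝ))
    (hcyc : L.head? = L.getLast?) (hal : ∀ e ∈ edges L, Aligned e) (c : ZMod 2) :
    IsOpen {z | z ∉ curveSet L ∧ Rcnt L z = c} := by
  rw [Metric.isOpen_iff]
  rintro z ⟨hzΓ, hzc⟩
  obtain ⟨ε, hε, hball⟩ := Metric.isOpen_iff.mp (isClosed_curveSet L).isOpen_compl z hzΓ
  refine ⟨ε, hε, ?_⟩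
  intro w hwb
  have hfar : ∀ e ∈ edges L, ∀ ζ ∈ segment ℝ e.1 e.2, ε ≤ dist z ζ := by
    intro e he ζ hζ
    by_contra hlt
    push_neg at hlt
    have : ζ ∈ Metric.ball z ε := by
      rw [Metric.mem_ball, dist_comm]
      exact hlt
    exact hball this ⟨e, he, hζ⟩
  have hw : dist z w < ε := by
    rw [dist_comm]
    exact Metric.mem_ball.mp hwb
  constructor
  · intro hwΓ
    obtain ⟨e, he, hζ⟩ := hwΓ
    exact absurd hw (not_lt.mpr (hfar e he w hζ))
  · rw [Rcnt_locally_const hcyc hal hfar hw, hzc]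

lemma not_mem_closure_parity (L : List (ℝ × ℝ))
    (hcyc : L.head? = L.getLast?) (hal : ∀ e ∈ edges L, Aligned e) {b : ℝ × ℝ} {c : ZMod 2}
    (hbΓ : b ∉ curveSet L) (hbc : Rcnt L b ≠ c) :
    b ∉ closure {z | z ∉ curveSet L ∧ Rcnt L z = c} := by
  intro hb
  have hopen : IsOpen {z | z ∉ curveSet L ∧ Rcnt L z = Rcnt L b} :=
    parity_region_open L hcyc hal _
  obtain ⟨w, hw1, hw2⟩ := mem_closure_iff.mp hb _ hopen ⟨hbΓ, rfl⟩
  exact hbc (hw1.2 ▸ hw2.2)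

end LabPf


namespace LabPf
open Labyrinth

/-! ### Grid lemmas -/

lemma mem_of_getLast?' {α : Type*} : ∀ {l : List α} {a : α}, l.getLast? = some a → a ∈ l
  | [], a, h => by simp at h
  | [b], a, h => by
      simp [List.getLast?_cons] at h
      simp [h]
  | b :: c :: l2, a, h => by
      right
      apply mem_of_getLast?' (l := c :: l2)
      simp only [List.getLast?_cons, Option.getD_some] at h ⊢
      exact h

lemma mProd_ge (m : ℕ → ℕ) (hm : ∀ k, 3 ≤ m k) (n : ℕ) : 3 ^ n ≤ mProd m n := by
  induction n with
  | zero => simp [mProd]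
  | succ n ih =>
    rw [mProd, Finset.prod_range_succ, pow_succ]
    exact Nat.mul_le_mul ih (hm n)

lemma mProd_pos (m : ℕ → ℕ) (hm : ∀ k, 3 ≤ m k) (n : ℕ) : 0 < mProd m n :=
  lt_of_lt_of_le (Nat.pow_pos (n := n) (by norm_num)) (mProd_ge m hm n)

lemma whites_bounds (m : ℕ → ℕ) (W : ℕ → Set (ℕ × ℕ))
    (hWg : ∀ k, ∀ p ∈ W k, p.1 < m k ∧ p.2 < m k) :
    ∀ n, ∀ p ∈ whites m W n, p.1 < mProd m n ∧ p.2 < mProd m n := by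
  intro n
  induction n with
  | zero =>
    intro p hp
    simp only [whites, Set.mem_singleton_iff] at hp
    subst hp
    simp [mProd]
  | succ n ih =>
    rintro p ⟨p₀, hp₀, r, hr, rfl⟩
    obtain ⟨h1, h2⟩ := ih p₀ hp₀
    obtain ⟨h3, h4⟩ := hWg n r hr
    rw [mProd, Finset.prod_range_succ, ← mProd]
    constructor
    · calc p₀.1 * m n + r.1 < p₀.1 * m n + m n := by omega
        _ = (p₀.1 + 1) * m n := by ring
        _ ≤ mProd m n * m n := Nat.mul_le_mul_right _ (by omega)
    · calc p₀.2 * m n + r.2 < p₀.2 * m n + m n := by omega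
        _ = (p₀.2 + 1) * m n := by ring
        _ ≤ mProd m n * m n := Nat.mul_le_mul_right _ (by omega)

lemma not_white_affine (m : ℕ → ℕ) (W : ℕ → Set (ℕ × ℕ))
    (hWg : ∀ k, ∀ p ∈ W k, p.1 < m k ∧ p.2 < m k) (n : ℕ)
    (c j : ℕ) {r : ℕ × ℕ} (hr1 : r.1 < m n) (hr2 : r.2 < m n) (hrW : r ∉ W n) :
    (c * m n + r.1, j * m n + r.2) ∉ whites m W (n + 1) := by
  rintro ⟨p₀, hp₀, ρ, hρ, heq⟩
  obtain ⟨hρ1, hρ2⟩ := hWg n ρ hρ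
  have e0 : c * m n + r.1 = p₀.1 * m n + ρ.1 := congrArg Prod.fst heq
  have f0 : j * m n + r.2 = p₀.2 * m n + ρ.2 := congrArg Prod.snd heq
  have e1 : m n * c + r.1 = m n * p₀.1 + ρ.1 := by
    rw [Nat.mul_comm (m n) c, Nat.mul_comm (m n) p₀.1]; exact e0
  have f1 : m n * j + r.2 = m n * p₀.2 + ρ.2 := by
    rw [Nat.mul_comm (m n) j, Nat.mul_comm (m n) p₀.2]; exact f0
  have m1 : r.1 = ρ.1 := by
    have h := congrArg (· % m n) e1
    simpa [Nat.mul_add_mod, Nat.mod_eq_of_lt hr1, Nat.mod_eq_of_lt hρ1] using h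
  have m2 : r.2 = ρ.2 := by
    have h := congrArg (· % m n) f1
    simpa [Nat.mul_add_mod, Nat.mod_eq_of_lt hr2, Nat.mod_eq_of_lt hρ2] using h
  exact hrW (by rw [show r = ρ from Prod.ext m1 m2]; exact hρ)

lemma cell_mem_iff {M : ℕ} {w : ℕ × ℕ} {z : ℝ × ℝ} :
    z ∈ cell M w ↔ ((w.1 : ℝ) / M ≤ z.1 ∧ z.1 ≤ ((w.1 : ℝ) + 1) / M)
      ∧ ((w.2 : ℝ) / M ≤ z.2 ∧ z.2 ≤ ((w.2 : ℝ) + 1) / M) := by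
  constructor
  · intro h
    exact ⟨⟨h.1.1, h.1.2⟩, ⟨h.2.1, h.2.2⟩⟩
  · intro h
    exact ⟨⟨h.1.1, h.1.2⟩, ⟨h.2.1, h.2.2⟩⟩

lemma nat_window {M : ℝ} (hM : 0 < M) {w lo hi : ℕ} {y : ℝ}
    (h1 : (w : ℝ) / M ≤ y) (h2 : y ≤ ((w : ℝ) + 1) / M)
    (h3 : ((lo : ℝ) + 1/2) / M ≤ y) (h4 : y ≤ ((hi : ℝ) + 1/2) / M) :
    lo ≤ w ∧ w ≤ hi := by
  have a1 : ((lo : ℝ) + 1/2) ≤ (w : ℝ) + 1 := by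
    have h5 := le_trans h3 h2
    rwa [div_le_div_iff₀ hM hM, mul_le_mul_iff_left₀ hM] at h5
  have a2 : (w : ℝ) ≤ (hi : ℝ) + 1/2 := by
    have h5 := le_trans h1 h4
    rwa [div_le_div_iff₀ hM hM, mul_le_mul_iff_left₀ hM] at h5
  constructor
  · have h5 : (lo : ℝ) < (w : ℝ) + 1 := by linarith
    have h6 : lo < w + 1 := by exact_mod_cast h5
    omega
  · have h5 : (w : ℝ) < (hi : ℝ) + 1 := by linarith
    have h6 : w < hi + 1 := by exact_mod_cast h5
    omega

/-- The centre of a grid cell. -/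
noncomputable def ctr (M : ℕ) (w : ℕ × ℕ) : ℝ × ℝ :=
  (((w.1 : ℝ) + 1/2) / M, ((w.2 : ℝ) + 1/2) / M)

lemma seg_avoid {M : ℕ} (hM : (0:ℝ) < M) {P Q wh : ℕ × ℕ} (hadj : SideAdj P Q) {z : ℝ × ℝ}
    (hz : z ∈ segment ℝ (ctr M P) (ctr M Q)) (hc : z ∈ cell M wh) : wh = P ∨ wh = Q := by
  obtain ⟨⟨hx1, hx2⟩, ⟨hy1, hy2⟩⟩ := cell_mem_iff.mp hc
  obtain ⟨⟨hz1, hz2⟩, ⟨hz3, hz4⟩⟩ := seg_bounds hz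
  have c1 : (((min P.1 Q.1 : ℕ) : ℝ) + 1/2) / M ≤ z.1 := by
    refine le_trans (le_min ?_ ?_) hz1 <;> unfold ctr <;> simp only <;> gcongr
    · exact_mod_cast min_le_left P.1 Q.1
    · exact_mod_cast min_le_right P.1 Q.1
  have c2 : z.1 ≤ (((max P.1 Q.1 : ℕ) : ℝ) + 1/2) / M := by
    refine le_trans hz2 (max_le ?_ ?_) <;> unfold ctr <;> simp only <;> gcongr
    · exact_mod_cast le_max_left P.1 Q.1
    · exact_mod_cast le_max_right P.1 Q.1
  have d1 : (((min P.2 Q.2 : ℕ) : ℝ) + 1/2) / M ≤ z.2 := by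
    refine le_trans (le_min ?_ ?_) hz3 <;> unfold ctr <;> simp only <;> gcongr
    · exact_mod_cast min_le_left P.2 Q.2
    · exact_mod_cast min_le_right P.2 Q.2
  have d2 : z.2 ≤ (((max P.2 Q.2 : ℕ) : ℝ) + 1/2) / M := by
    refine le_trans hz4 (max_le ?_ ?_) <;> unfold ctr <;> simp only <;> gcongr
    · exact_mod_cast le_max_left P.2 Q.2
    · exact_mod_cast le_max_right P.2 Q.2
  have hw1 := nat_window hM hx1 hx2 c1 c2
  have hw2 := nat_window hM hy1 hy2 d1 d2
  have key : (wh.1 = P.1 ∧ wh.2 = P.2) ∨ (wh.1 = Q.1 ∧ wh.2 = Q.2) := by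
    rcases hadj with ⟨h1, h2⟩ | ⟨h1, h2⟩ <;> omega
  rcases key with ⟨u1, u2⟩ | ⟨u1, u2⟩
  · exact Or.inl (Prod.ext u1 u2)
  · exact Or.inr (Prod.ext u1 u2)

/-! ### List plumbing -/

lemma head?_append_left {α : Type*} {l₁ l₂ : List α} (h : l₁ ≠ []) :
    (l₁ ++ l₂).head? = l₁.head? := by
  cases l₁ with
  | nil => exact absurd rfl h
  | cons a l => rfl

lemma getLast?_append_right {α : Type*} {l₁ l₂ : List α} (h : l₂ ≠ []) :
    (l₁ ++ l₂).getLast? = l₂.getLast? := by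
  rw [List.getLast?_append]
  cases l₂ with
  | nil => exact absurd rfl h
  | cons a l => simp [List.getLast?_cons]

lemma edges_append : ∀ (l₁ l₂ : List (ℝ × ℝ)) {x y : ℝ × ℝ},
    l₁.getLast? = some x → l₂.head? = some y →
    edges (l₁ ++ l₂) = edges l₁ ++ (x, y) :: edges l₂
  | [], l₂, x, y, hx, hy => by simp at hx
  | [a], l₂, x, y, hx, hy => by
      cases l₂ with
      | nil => simp at hy
      | cons b l₂' =>
        simp only [List.getLast?_cons, Option.getD_none] at hx
        simp only [List.head?_cons] at hy
        have hxa : x = a := by simp_all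
        have hyb : y = b := by simp_all
        subst hxa hyb
        rfl
  | a :: b :: l₁', l₂, x, y, hx, hy => by
      have hx' : (b :: l₁').getLast? = some x := by
        simp only [List.getLast?_cons, Option.getD_some] at hx ⊢
        exact hx
      have := edges_append (b :: l₁') l₂ hx' hy
      show edges (a :: ((b :: l₁') ++ l₂)) = _
      have h2 : (b :: l₁') ++ l₂ = b :: (l₁' ++ l₂) := rfl
      rw [h2, edges_cons_cons, ← h2, this]
      rfl

lemma chain'_of_chain'_mem {α : Type*} {R S : α → α → Prop} {P : α → Prop} :
    ∀ {l : List α}, l.Chain' R → (∀ x ∈ l, P x) →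
      (∀ a b, R a b → P a → P b → S a b) → l.Chain' S
  | [], _, _, _ => List.isChain_nil
  | [a], _, _, _ => List.isChain_singleton a
  | a :: b :: l, hc, hP, himp => by
      unfold List.Chain' at hc ⊢
      rw [List.isChain_cons_cons] at hc ⊢
      refine ⟨himp a b hc.1 (hP a (by simp)) (hP b (by simp)), ?_⟩
      exact chain'_of_chain'_mem hc.2 (fun x hx => hP x (List.mem_cons_of_mem a hx)) himp

lemma flatMap_range_ne_nil {α : Type*} {N : ℕ} {f : ℕ → List α} (hN : 0 < N)
    (hf : ∀ j, f j ≠ []) : (List.range N).flatMap f ≠ [] := by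
  intro h
  rw [List.flatMap_eq_nil_iff] at h
  exact hf 0 (h 0 (by simp [List.mem_range]; omega))

lemma head?_flatMap_range {α : Type*} {N : ℕ} {f : ℕ → List α} (hN : 0 < N)
    (hf : ∀ j, f j ≠ []) : ((List.range N).flatMap f).head? = (f 0).head? := by
  cases N with
  | zero => omega
  | succ N =>
    have : List.range (N + 1) = 0 :: (List.range' 1 N) := by
      rw [List.range_eq_range']
      rfl
    rw [this]
    simp only [List.flatMap_cons]
    exact head?_append_left (hf 0)

lemma getLast?_flatMap_range {α : Type*} {f : ℕ → List α} (hf : ∀ j, f j ≠ []) :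
    ∀ N : ℕ, 0 < N → ((List.range N).flatMap f).getLast? = (f (N - 1)).getLast? := by
  intro N hN
  cases N with
  | zero => omega
  | succ N =>
    rw [List.range_succ, List.flatMap_append]
    simp only [List.flatMap_cons, List.flatMap_nil, List.append_nil]
    rw [getLast?_append_right (hf N)]
    simp

lemma chain'_flatMap_range {α : Type*} {R : α → α → Prop} {f : ℕ → List α}
    (hf : ∀ j, f j ≠ []) (hc : ∀ j, (f j).Chain' R)
    (hj : ∀ j, ∀ x ∈ (f j).getLast?, ∀ y ∈ (f (j+1)).head?, R x y) :
    ∀ N : ℕ, ((List.range N).flatMap f).Chain' R := by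
  intro N
  induction N with
  | zero => exact List.isChain_nil
  | succ N ih =>
    rw [List.range_succ, List.flatMap_append]
    simp only [List.flatMap_cons, List.flatMap_nil, List.append_nil]
    apply List.IsChain.append ih (hc N)
    intro x hx y hy
    cases N with
    | zero => simp at hx
    | succ N' =>
      rw [getLast?_flatMap_range hf (N' + 1) (by omega)] at hx
      simp only [Nat.add_sub_cancel] at hx
      exact hj N' x hx y hy

/-! ### The crossing polyline -/

def affc (c mn j : ℕ) (r : ℕ × ℕ) : ℕ × ℕ := (c * mn + r.1, j * mn + r.2)

def gtL (c mn M0 : ℕ) (l : List (ℕ × ℕ)) : List (ℕ × ℕ) :=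
  (List.range M0).flatMap fun j => l.map (affc c mn j)

noncomputable def xsr (M2 s : ℕ) : ℝ := ((s : ℝ) + 1/2) / (M2 : ℝ)

noncomputable def vL (M2 c mn M0 i₀ : ℕ) (l : List (ℕ × ℕ)) : List (ℝ × ℝ) :=
  (xsr M2 (c*mn+i₀), -1) :: ((gtL c mn M0 l).map (ctr M2) ++
    [(xsr M2 (c*mn+i₀), 2), (-10, 2), (-10, -1), (xsr M2 (c*mn+i₀), -1)])

section CrossSec

variable {M2 c mn M0 i₀ : ℕ} {l : List (ℕ × ℕ)} {WH : Set (ℕ × ℕ)}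

lemma sideAdj_affc {j : ℕ} {r r' : ℕ × ℕ} (h : SideAdj r r') :
    SideAdj (affc c mn j r) (affc c mn j r') := by
  rcases h with ⟨h1, h2⟩ | ⟨h1, h2⟩
  · exact Or.inl ⟨by simp [affc, h1], by simp only [affc]; omega⟩
  · exact Or.inr ⟨by simp [affc, h1], by simp only [affc]; omega⟩

lemma blk_ne (hlne : l ≠ []) (j : ℕ) : l.map (affc c mn j) ≠ [] := by
  simpa using hlne

lemma gtL_ne (hM0 : 0 < M0) (hlne : l ≠ []) : gtL c mn M0 l ≠ [] :=
  flatMap_range_ne_nil hM0 (blk_ne hlne)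

lemma gtL_head (hM0 : 0 < M0) (hlne : l ≠ [])
    (hlhead : l.head? = some (i₀, 0)) :
    (gtL c mn M0 l).head? = some (c*mn + i₀, 0) := by
  rw [gtL, head?_flatMap_range hM0 (blk_ne hlne), List.head?_map, hlhead]
  simp [affc]

lemma gtL_last (hM0 : 0 < M0) (hmn : 3 ≤ mn) (hlne : l ≠ [])
    (hllast : l.getLast? = some (i₀, mn - 1)) :
    (gtL c mn M0 l).getLast? = some (c*mn + i₀, M0 * mn - 1) := by
  rw [gtL, getLast?_flatMap_range (blk_ne hlne) M0 hM0, List.getLast?_map, hllast]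
  simp only [Option.map_some, affc]
  congr 2
  have h1 : 1 ≤ M0 := hM0
  have h2 : 3 ≤ mn := hmn
  cases' Nat.exists_eq_add_of_le h1 with k hk
  subst hk
  have hk1 : 1 + k - 1 = k := by omega
  have hmn1 : 1 ≤ mn := by omega
  rw [hk1, Nat.add_mul, one_mul, Nat.add_comm mn (k * mn), Nat.add_sub_assoc hmn1]

lemma gtL_chain (hM0 : 0 < M0) (hmn : 3 ≤ mn) (hlne : l ≠ [])
    (hlch : l.Chain' SideAdj)
    (hlhead : l.head? = some (i₀, 0)) (hllast : l.getLast? = some (i₀, mn - 1)) :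
    (gtL c mn M0 l).Chain' SideAdj := by
  apply chain'_flatMap_range (blk_ne hlne)
  · intro j
    exact List.isChain_map _ |>.mpr (hlch.imp fun a b => sideAdj_affc)
  · intro j x hx y hy
    rw [List.getLast?_map, hllast] at hx
    rw [List.head?_map, hlhead] at hy
    simp only [Option.map_some, Option.mem_def, Option.some_inj] at hx hy
    subst hx; subst hy
    refine Or.inl ⟨by simp [affc], Or.inl ?_⟩
    simp only [affc]
    have hmn1 : (mn - 1) + 1 = mn := by omega
    rw [Nat.add_assoc, hmn1, Nat.add_mul, one_mul, Nat.add_zero]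

lemma gtL_mem {w : ℕ × ℕ} (hw : w ∈ gtL c mn M0 l) :
    ∃ j r, r ∈ l ∧ w = affc c mn j r := by
  rw [gtL, List.mem_flatMap] at hw
  obtain ⟨j, _, hw⟩ := hw
  obtain ⟨r, hr, rfl⟩ := List.mem_map.mp hw
  exact ⟨j, r, hr, rfl⟩

end CrossSec

/-- The property required of every edge of the polyline : axis-aligned, and avoiding
every white cell. -/
def EP (M2 : ℕ) (WH : Set (ℕ × ℕ)) (p q : ℝ × ℝ) : Prop :=
  (p.1 = q.1 ∨ p.2 = q.2) ∧ ∀ z ∈ segment ℝ p q, ∀ wh ∈ WH, z ∉ cell M2 wh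

section CrossSec2

variable {M2 c mn M0 i₀ : ℕ} {l : List (ℕ × ℕ)} {WH : Set (ℕ × ℕ)}

lemma ep_center (hM2R : (0:ℝ) < (M2:ℝ)) {P Q : ℕ × ℕ} (hadj : SideAdj P Q)
    (hP : P ∉ WH) (hQ : Q ∉ WH) : EP M2 WH (ctr M2 P) (ctr M2 Q) := by
  constructor
  · rcases hadj with ⟨h1, _⟩ | ⟨h1, _⟩
    · exact Or.inl (by simp [ctr, h1])
    · exact Or.inr (by simp [ctr, h1])
  · intro z hz wh hwh hc
    rcases seg_avoid hM2R hadj hz hc with rfl | rfl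
    · exact hP hwh
    · exact hQ hwh

lemma seg_x_const {p q z : ℝ × ℝ} (hz : z ∈ segment ℝ p q) (h : p.1 = q.1) : z.1 = p.1 := by
  obtain ⟨⟨h1, h2⟩, _⟩ := seg_bounds hz
  rw [← h, min_self] at h1
  rw [← h, max_self] at h2
  linarith

lemma seg_y_const {p q z : ℝ × ℝ} (hz : z ∈ segment ℝ p q) (h : p.2 = q.2) : z.2 = p.2 := by
  obtain ⟨_, ⟨h1, h2⟩⟩ := seg_bounds hz
  rw [← h, min_self] at h1
  rw [← h, max_self] at h2
  linarith

lemma ep_S1 (hM2R : (0:ℝ) < (M2:ℝ)) (hs0 : ((c*mn+i₀ : ℕ), 0) ∉ WH) :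
    EP M2 WH (xsr M2 (c*mn+i₀), -1) (ctr M2 (c*mn+i₀, 0)) := by
  constructor
  · exact Or.inl rfl
  · intro z hz wh hwh hc
    obtain ⟨⟨hx1, hx2⟩, ⟨hy1, hy2⟩⟩ := cell_mem_iff.mp hc
    have hzx : z.1 = xsr M2 (c*mn+i₀) := seg_x_const hz rfl
    obtain ⟨_, ⟨_, hz4⟩⟩ := seg_bounds hz
    have hy0 : ((0:ℕ) : ℝ) + 1/2 = 1/2 := by norm_num
    have hzy : z.2 ≤ (1/2) / M2 := by
      refine le_trans hz4 (max_le ?_ ?_)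
      · have : (-1 : ℝ) ≤ 0 := by norm_num
        have h2 : (0:ℝ) ≤ (1/2)/(M2:ℝ) := by positivity
        simp only
        linarith
      · show (ctr M2 (c*mn+i₀, 0)).2 ≤ _
        simp [ctr]
    -- wh.1 = c*mn+i₀
    have hw1 : wh.1 = c*mn+i₀ := by
      have := nat_window (lo := c*mn+i₀) (hi := c*mn+i₀) hM2R hx1 hx2
        (le_of_eq (by rw [hzx]; rfl)) (le_of_eq (by rw [hzx]; rfl))
      omega
    have hw2 : wh.2 = 0 := by
      have h5 : (wh.2 : ℝ) / M2 ≤ (1/2) / M2 := le_trans hy1 hzy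
      rw [div_le_div_iff₀ hM2R hM2R, mul_le_mul_iff_left₀ hM2R] at h5
      have : (wh.2 : ℝ) < 1 := by linarith
      exact_mod_cast Nat.lt_one_iff.mp (by exact_mod_cast this)
    have : wh = ((c*mn+i₀ : ℕ), 0) := Prod.ext hw1 hw2
    rw [this] at hwh
    exact hs0 hwh

lemma ep_S2 (hM2R : (0:ℝ) < (M2:ℝ)) (hM2n : 1 ≤ M2)
    (hWHb : ∀ w ∈ WH, w.1 < M2 ∧ w.2 < M2)
    (hsl : ((c*mn+i₀ : ℕ), M2 - 1) ∉ WH) :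
    EP M2 WH (ctr M2 (c*mn+i₀, M2 - 1)) (xsr M2 (c*mn+i₀), 2) := by
  constructor
  · exact Or.inl rfl
  · intro z hz wh hwh hc
    obtain ⟨⟨hx1, hx2⟩, ⟨hy1, hy2⟩⟩ := cell_mem_iff.mp hc
    have hzx : z.1 = (ctr M2 (c*mn+i₀, M2-1)).1 := seg_x_const hz rfl
    obtain ⟨_, ⟨hz3, _⟩⟩ := seg_bounds hz
    have hcast : ((M2 - 1 : ℕ) : ℝ) = (M2 : ℝ) - 1 := by
      push_cast [Nat.cast_sub hM2n]
      ring
    have hzy : ((M2:ℝ) - 1 + 1/2) / M2 ≤ z.2 := by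
      refine le_trans (le_min ?_ ?_) hz3
      · show _ ≤ (ctr M2 (c*mn+i₀, M2-1)).2
        simp only [ctr]
        rw [hcast]
      · have h1 : ((M2:ℝ) - 1 + 1/2)/M2 ≤ 1 := by
          rw [div_le_one hM2R]; linarith
        simp only
        linarith
    have hw1 : wh.1 = c*mn+i₀ := by
      have := nat_window (lo := c*mn+i₀) (hi := c*mn+i₀) hM2R hx1 hx2
        (le_of_eq (by rw [hzx]; rfl)) (le_of_eq (by rw [hzx]; rfl))
      omega
    have hw2 : wh.2 = M2 - 1 := by
      have h5 : ((M2:ℝ) - 1 + 1/2) / M2 ≤ ((wh.2:ℝ) + 1) / M2 := le_trans hzy hy2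
      rw [div_le_div_iff₀ hM2R hM2R, mul_le_mul_iff_left₀ hM2R] at h5
      have h6 : (M2 : ℝ) < (wh.2 : ℝ) + 2 := by linarith
      have h7 : M2 < wh.2 + 2 := by exact_mod_cast h6
      have h8 := (hWHb wh hwh).2
      omega
    have : wh = ((c*mn+i₀ : ℕ), M2 - 1) := Prod.ext hw1 hw2
    rw [this] at hwh
    exact hsl hwh

lemma ep_S3 (hM2R : (0:ℝ) < (M2:ℝ)) (hWHb : ∀ w ∈ WH, w.1 < M2 ∧ w.2 < M2) :
    EP M2 WH (xsr M2 (c*mn+i₀), 2) (-10, 2) := by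
  refine ⟨Or.inr rfl, ?_⟩
  intro z hz wh hwh hc
  obtain ⟨_, ⟨hy1, hy2⟩⟩ := cell_mem_iff.mp hc
  have hzy : z.2 = 2 := seg_y_const hz rfl
  have hb := (hWHb wh hwh).2
  have h1 : ((wh.2 : ℝ) + 1) / M2 ≤ 1 := by
    rw [div_le_one hM2R]
    have : (wh.2 : ℝ) + 1 ≤ (M2 : ℝ) := by exact_mod_cast hb
    linarith
  rw [hzy] at hy2
  linarith

lemma ep_S4 (hM2R : (0:ℝ) < (M2:ℝ)) :
    EP M2 WH ((-10 : ℝ), 2) (-10, -1) := by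
  refine ⟨Or.inl rfl, ?_⟩
  intro z hz wh hwh hc
  obtain ⟨⟨hx1, _⟩, _⟩ := cell_mem_iff.mp hc
  have hzx : z.1 = -10 := seg_x_const hz rfl
  have h0 : (0:ℝ) ≤ (wh.1 : ℝ) / M2 := by positivity
  rw [hzx] at hx1
  linarith

lemma ep_S5 (hM2R : (0:ℝ) < (M2:ℝ)) :
    EP M2 WH ((-10 : ℝ), -1) (xsr M2 (c*mn+i₀), -1) := by
  refine ⟨Or.inr rfl, ?_⟩
  intro z hz wh hwh hc
  obtain ⟨_, ⟨hy1, _⟩⟩ := cell_mem_iff.mp hc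
  have hzy : z.2 = -1 := seg_y_const hz rfl
  have h0 : (0:ℝ) ≤ (wh.2 : ℝ) / M2 := by positivity
  rw [hzy] at hy1
  linarith

end CrossSec2

section CrossSec3

variable {M2 c mn M0 i₀ : ℕ} {l : List (ℕ × ℕ)} {WH : Set (ℕ × ℕ)}

lemma last_index_eq (hM0 : 0 < M0) (hmn : 3 ≤ mn) :
    (M0 - 1) * mn + (mn - 1) = M0 * mn - 1 := by
  obtain ⟨k, hk⟩ := Nat.exists_eq_add_of_le hM0
  subst hk
  have hk1 : 0 + 1 + k - 1 = k := by omega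
  have h2 : (0 + 1 + k) * mn = mn + k * mn := by rw [Nat.add_mul]; simp
  have hmn1 : 1 ≤ mn := by omega
  rw [hk1, h2, Nat.add_comm mn (k * mn), Nat.add_sub_assoc hmn1]

lemma vl_chain (hM2R : (0:ℝ) < (M2:ℝ)) (hM2n : 1 ≤ M2) (hmn : 3 ≤ mn) (hM0 : 0 < M0)
    (hM2 : M2 = M0 * mn) (hlne : l ≠ []) (hlch : l.Chain' SideAdj)
    (hlhead : l.head? = some (i₀, 0)) (hllast : l.getLast? = some (i₀, mn - 1))
    (hWHb : ∀ w ∈ WH, w.1 < M2 ∧ w.2 < M2)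
    (hNW : ∀ j : ℕ, ∀ r ∈ l, affc c mn j r ∉ WH) :
    (vL M2 c mn M0 i₀ l).Chain' (EP M2 WH) := by
  have hheadmem : (i₀, 0) ∈ l := List.mem_of_mem_head? (Option.mem_def.mpr hlhead)
  have hlastmem : (i₀, mn - 1) ∈ l := mem_of_getLast?' hllast
  have hs0 : ((c*mn+i₀ : ℕ), 0) ∉ WH := by
    have := hNW 0 _ hheadmem
    simpa [affc] using this
  have hsl : ((c*mn+i₀ : ℕ), M2 - 1) ∉ WH := by
    have h := hNW (M0 - 1) _ hlastmem
    have he : affc c mn (M0-1) (i₀, mn-1) = ((c*mn+i₀ : ℕ), M2 - 1) := by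
      simp only [affc]
      rw [last_index_eq hM0 hmn, hM2]
    rwa [he] at h
  have hCL : ((gtL c mn M0 l).map (ctr M2)).Chain' (EP M2 WH) := by
    unfold List.Chain'; rw [List.isChain_map]
    apply chain'_of_chain'_mem (gtL_chain hM0 hmn hlne hlch hlhead hllast)
      (P := fun w => w ∉ WH)
    · intro w hw
      obtain ⟨j, r, hr, rfl⟩ := gtL_mem hw
      exact hNW j r hr
    · intro P Q hadj hP hQ
      exact ep_center hM2R hadj hP hQ
  have hCLhead : ((gtL c mn M0 l).map (ctr M2)).head? = some (ctr M2 (c*mn+i₀, 0)) := by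
    rw [List.head?_map, gtL_head hM0 hlne hlhead]
    rfl
  have hCLlast : ((gtL c mn M0 l).map (ctr M2)).getLast? = some (ctr M2 (c*mn+i₀, M2-1)) := by
    rw [List.getLast?_map, gtL_last hM0 hmn hlne hllast, ← hM2]
    rfl
  have hT4 : ([(xsr M2 (c*mn+i₀), 2), ((-10:ℝ), 2), (-10, -1),
      (xsr M2 (c*mn+i₀), -1)] : List (ℝ × ℝ)).Chain' (EP M2 WH) := by
    refine List.isChain_cons_cons.mpr ⟨ep_S3 hM2R hWHb, ?_⟩
    refine List.isChain_cons_cons.mpr ⟨ep_S4 hM2R, ?_⟩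
    refine List.isChain_cons_cons.mpr ⟨ep_S5 hM2R, ?_⟩
    exact List.isChain_singleton _
  rw [vL]
  refine List.isChain_cons.mpr ⟨?_, ?_⟩
  · intro y hy
    rw [head?_append_left (by simp [gtL_ne hM0 hlne]), hCLhead] at hy
    rw [Option.mem_def, Option.some_inj] at hy
    subst hy
    exact ep_S1 hM2R hs0
  · apply List.IsChain.append hCL hT4
    intro x hx y hy
    rw [hCLlast, Option.mem_def, Option.some_inj] at hx
    rw [List.head?_cons, Option.mem_def, Option.some_inj] at hy
    subst hx; subst hy
    exact ep_S2 hM2R hM2n hWHb hsl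

lemma vl_cyc : (vL M2 c mn M0 i₀ l).head? = (vL M2 c mn M0 i₀ l).getLast? := by
  have h : vL M2 c mn M0 i₀ l
      = ((xsr M2 (c*mn+i₀), (-1:ℝ)) :: ((gtL c mn M0 l).map (ctr M2)
        ++ [(xsr M2 (c*mn+i₀), 2), ((-10:ℝ), 2), (-10, -1)])) ++ [(xsr M2 (c*mn+i₀), -1)] := by
    simp [vL]
  rw [h, List.getLast?_concat]
  rfl

end CrossSec3

section CrossSec4

variable {M2 c mn M0 i₀ : ℕ} {l : List (ℕ × ℕ)} {WH : Set (ℕ × ℕ)}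

lemma div_mono_num {M x y : ℝ} (hM : 0 < M) (h : x ≤ y) : x / M ≤ y / M := by gcongr

lemma vl_xcoords (hM2R : (0:ℝ) < (M2:ℝ)) (hi₀ : i₀ < mn)
    (hli : ∀ p ∈ l, p.1 < mn ∧ p.2 < mn) :
    ∀ p ∈ vL M2 c mn M0 i₀ l,
      p.1 = -10 ∨ ∃ w1 : ℕ, c*mn ≤ w1 ∧ w1 < c*mn + mn ∧ p.1 = ((w1:ℝ) + 1/2) / M2 := by
  intro p hp
  rw [vL, List.mem_cons, List.mem_append] at hp
  have hxs : ∃ w1 : ℕ, c*mn ≤ w1 ∧ w1 < c*mn + mn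
      ∧ (xsr M2 (c*mn+i₀)) = ((w1:ℝ) + 1/2) / M2 := by
    refine ⟨c*mn+i₀, by omega, by omega, ?_⟩
    simp [xsr]
  rcases hp with rfl | hp | hp
  · exact Or.inr hxs
  · obtain ⟨w, hw, rfl⟩ := List.mem_map.mp hp
    obtain ⟨j, r, hr, rfl⟩ := gtL_mem hw
    refine Or.inr ⟨c*mn + r.1, by omega, by have := (hli r hr).1; omega, ?_⟩
    simp [ctr, affc]
  · simp only [List.mem_cons, List.not_mem_nil, or_false, List.mem_singleton] at hp
    rcases hp with rfl | rfl | rfl | rfl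
    · exact Or.inr hxs
    · exact Or.inl rfl
    · exact Or.inl rfl
    · exact Or.inr hxs

lemma vl_Rcnt_b (hM2R : (0:ℝ) < (M2:ℝ)) (hi₀ : i₀ < mn)
    (hli : ∀ p ∈ l, p.1 < mn ∧ p.2 < mn) {b : ℝ × ℝ}
    (hbM : (((c*mn+mn : ℕ) : ℝ)) / M2 < b.1) (hb10 : (-10 : ℝ) < b.1) :
    Rcnt (vL M2 c mn M0 i₀ l) b = 0 := by
  apply List.sum_eq_zero
  intro x hx
  obtain ⟨e, he, rfl⟩ := List.mem_map.mp hx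
  apply b2z_not
  rintro ⟨-, hlt⟩
  have he1 := (mem_of_mem_edges he).1
  rcases vl_xcoords hM2R hi₀ hli e.1 he1 with h | ⟨w1, hw1, hw2, hw3⟩
  · rw [h] at hlt; linarith
  · rw [hw3] at hlt
    have hcast : (w1 : ℝ) + 1/2 < ((c*mn+mn : ℕ) : ℝ) := by
      have h5 : w1 + 1 ≤ c*mn+mn := hw2
      have h6 : ((w1 : ℕ) : ℝ) + 1 ≤ ((c*mn+mn : ℕ) : ℝ) := by exact_mod_cast h5
      linarith
    have h7 : ((w1:ℝ) + 1/2)/M2 < (((c*mn+mn : ℕ) : ℝ))/M2 := by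
      rw [div_lt_div_iff₀ hM2R hM2R]
      exact mul_lt_mul_of_pos_right hcast hM2R
    linarith

lemma vl_Ucnt_a (hM2R : (0:ℝ) < (M2:ℝ)) (hi₀ : i₀ < mn) (hM0 : 0 < M0) (hlne : l ≠ [])
    (hli : ∀ p ∈ l, p.1 < mn ∧ p.2 < mn) {a : ℝ × ℝ}
    (ha1 : 0 ≤ a.1) (haM : a.1 < (((c*mn : ℕ) : ℝ)) / M2)
    (ha2 : 0 ≤ a.2) (ha3 : a.2 ≤ 1) :
    Ucnt (vL M2 c mn M0 i₀ l) a = 1 := by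
  set xs := xsr M2 (c*mn+i₀) with hxs
  set CL := (gtL c mn M0 l).map (ctr M2) with hCL
  have hxsgt : a.1 < xs := by
    refine lt_of_lt_of_le haM ?_
    rw [hxs, xsr]
    apply div_mono_num hM2R
    push_cast
    have : (0:ℝ) ≤ (i₀ : ℝ) := Nat.cast_nonneg _
    linarith
  have hCC : vL M2 c mn M0 i₀ l
      = ((xs, (-1:ℝ)) :: (CL ++ [(xs, 2)])) ++ [((-10:ℝ), 2), (-10, -1), (xs, -1)] := by
    simp [vL, hxs, hCL]
  have hCClast : ((xs, (-1:ℝ)) :: (CL ++ [(xs, 2)])).getLast? = some (xs, 2) := by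
    have h : (xs, (-1:ℝ)) :: (CL ++ [(xs, 2)]) = ((xs, (-1:ℝ)) :: CL) ++ [(xs, 2)] := by simp
    rw [h, List.getLast?_concat]
  have hedges : edges (vL M2 c mn M0 i₀ l)
      = edges ((xs, (-1:ℝ)) :: (CL ++ [(xs, 2)]))
        ++ ((xs, 2), ((-10:ℝ), 2)) :: edges [((-10:ℝ), 2), ((-10:ℝ), -1), (xs, -1)] := by
    rw [hCC]
    exact edges_append _ _ hCClast rfl
  have hfrontx : ∀ p ∈ (xs, (-1:ℝ)) :: (CL ++ [(xs, 2)]), a.1 < p.1 := by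
    intro p hp
    rw [List.mem_cons, List.mem_append] at hp
    rcases hp with rfl | hp | hp
    · exact hxsgt
    · obtain ⟨w, hw, rfl⟩ := List.mem_map.mp hp
      obtain ⟨j, r, hr, rfl⟩ := gtL_mem hw
      show a.1 < ((((c*mn + r.1 : ℕ)) : ℝ) + 1/2) / M2
      refine lt_of_lt_of_le haM (div_mono_num hM2R ?_)
      push_cast
      have : (0:ℝ) ≤ (r.1 : ℝ) := Nat.cast_nonneg _
      linarith
    · rw [List.mem_singleton] at hp
      subst hp
      exact hxsgt
  have hfront0 : ((edges ((xs, (-1:ℝ)) :: (CL ++ [(xs, 2)]))).map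
      (fun e => b2z (¬ ((a.1 < e.1.1) ↔ (a.1 < e.2.1)) ∧ e.1.2 ≤ a.2))).sum = 0 := by
    apply List.sum_eq_zero
    intro x hx
    obtain ⟨e, he, rfl⟩ := List.mem_map.mp hx
    apply b2z_not
    rintro ⟨hflip, -⟩
    obtain ⟨h1, h2⟩ := mem_of_mem_edges he
    exact hflip (iff_of_true (hfrontx e.1 h1) (hfrontx e.2 h2))
  rw [Ucnt, hedges, List.map_append, List.sum_append, List.map_cons, List.sum_cons, hfront0]
  have e1 : edges [((-10:ℝ),2),((-10:ℝ),-1),(xs,-1)]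
      = [(((-10:ℝ),(2:ℝ)),((-10:ℝ),(-1:ℝ))), ((((-10:ℝ),(-1:ℝ))),(xs,(-1:ℝ)))] := rfl
  rw [e1]
  simp only [List.map_cons, List.map_nil, List.sum_cons, List.sum_nil]
  show (0:ZMod 2) + (b2z (¬ ((a.1 < xs) ↔ (a.1 < -10)) ∧ (2:ℝ) ≤ a.2)
      + (b2z (¬ True ∧ (2:ℝ) ≤ a.2)
      + (b2z (¬ ((a.1 < -10) ↔ (a.1 < xs)) ∧ (-1:ℝ) ≤ a.2) + 0))) = 1
  rw [b2z_not _ (fun h => by linarith [h.2]),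
    b2z_not _ (fun h => h.1 trivial),
    b2z_of _ ⟨fun hiff => by have := hiff.mpr hxsgt; linarith, by linarith⟩]
  norm_num

end CrossSec4


lemma mProd_succ (m : ℕ → ℕ) (n : ℕ) : mProd m (n+1) = mProd m n * m n := by
  rw [mProd, mProd, Finset.prod_range_succ]

lemma zmod2_dichot : ∀ x : ZMod 2, x = 0 ∨ x = 1 := by decide

theorem vsep (m : ℕ → ℕ) (W : ℕ → Set (ℕ × ℕ))
    (hm : ∀ k, 3 ≤ m k)
    (hWg : ∀ k, ∀ p ∈ W k, p.1 < m k ∧ p.2 < m k)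
    (htr : ∀ k, ∃ (l : List (ℕ × ℕ)) (i₀ : ℕ),
      l ≠ [] ∧ l.Chain' SideAdj ∧ (∀ p ∈ l, p.1 < m k ∧ p.2 < m k ∧ p ∉ W k) ∧
      l.head? = some (i₀, 0) ∧ l.getLast? = some (i₀, m k - 1))
    {t : Set (ℝ × ℝ)} (ht : t ⊆ limitSet m W) (htc : IsPreconnected t)
    {a b : ℝ × ℝ} (ha : a ∈ t) (hb : b ∈ t) (hab : a.1 < b.1) : False := by
  classical
  have hsq : ∀ z ∈ limitSet m W, 0 ≤ z.1 ∧ z.1 ≤ 1 ∧ 0 ≤ z.2 ∧ z.2 ≤ 1 := by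
    intro z hz
    have h0 := Set.mem_iInter.mp hz 0
    rw [levelSet] at h0
    simp only [Set.mem_iUnion] at h0
    obtain ⟨p, hp, hcell⟩ := h0
    have hp0 : p = ((0:ℕ), (0:ℕ)) := by
      simpa [whites] using hp
    subst hp0
    obtain ⟨⟨u1, u2⟩, ⟨u3, u4⟩⟩ := cell_mem_iff.mp hcell
    have hm0 : mProd m 0 = 1 := by simp [mProd]
    rw [hm0] at u1 u2 u3 u4
    norm_num at u1 u2 u3 u4
    exact ⟨u1, u2, u3, u4⟩
  obtain ⟨ha1, ha2, ha3, ha4⟩ := hsq a (ht ha)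
  obtain ⟨hb1, hb2, hb3, hb4⟩ := hsq b (ht hb)
  have hd : 0 < b.1 - a.1 := by linarith
  obtain ⟨n, hn⟩ := pow_unbounded_of_one_lt (R := ℝ) (2 / (b.1 - a.1)) (by norm_num : (1:ℝ) < 3)
  have hMge : (3:ℝ)^n ≤ (mProd m n : ℝ) := by
    have := mProd_ge m hm n
    exact_mod_cast this
  have h2lt : 2 < (mProd m n : ℝ) * (b.1 - a.1) := by
    have h1 : 2 / (b.1 - a.1) * (b.1 - a.1) = 2 := div_mul_cancel₀ _ hd.ne'
    nlinarith [pow_pos (show (0:ℝ) < 3 by norm_num) n]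
  set M0 := mProd m n with hM0def
  have hM0 : 0 < M0 := mProd_pos m hm n
  have hM0R : (0:ℝ) < (M0:ℝ) := by exact_mod_cast hM0
  set c := ⌊a.1 * M0⌋₊ + 1 with hcdef
  have hac : a.1 < (c:ℝ)/M0 := by
    rw [lt_div_iff₀ hM0R]
    calc a.1 * M0 < (⌊a.1 * M0⌋₊ : ℝ) + 1 := Nat.lt_floor_add_one _
      _ = (c:ℝ) := by rw [hcdef]; push_cast; ring
  have hcb : ((c:ℝ)+1)/M0 < b.1 := by
    rw [div_lt_iff₀ hM0R]
    have h1 : ((⌊a.1 * M0⌋₊ : ℝ)) ≤ a.1 * M0 := Nat.floor_le (by positivity)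
    have h2 : (c:ℝ) = (⌊a.1 * M0⌋₊ : ℝ) + 1 := by rw [hcdef]; push_cast; ring
    nlinarith
  obtain ⟨l, i₀, hlne, hlch, hlsafe, hlhead, hllast⟩ := htr n
  set mn := m n with hmndef
  have hmn : 3 ≤ mn := hm n
  set M2 := mProd m (n+1) with hM2def
  have hM2 : M2 = M0 * mn := mProd_succ m n
  have hM2pos : 0 < M2 := mProd_pos m hm (n+1)
  have hM2R : (0:ℝ) < (M2:ℝ) := by exact_mod_cast hM2pos
  have hheadmem : (i₀, 0) ∈ l := List.mem_of_mem_head? (Option.mem_def.mpr hlhead)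
  have hi₀ : i₀ < mn := (hlsafe _ hheadmem).1
  have hli : ∀ p ∈ l, p.1 < mn ∧ p.2 < mn := fun p hp => ⟨(hlsafe p hp).1, (hlsafe p hp).2.1⟩
  have hWHb : ∀ w ∈ whites m W (n+1), w.1 < M2 ∧ w.2 < M2 := whites_bounds m W hWg (n+1)
  have hNW : ∀ j : ℕ, ∀ r ∈ l, affc c mn j r ∉ whites m W (n+1) := fun j r hr =>
    not_white_affine m W hWg n c j (hlsafe r hr).1 (hlsafe r hr).2.1 (hlsafe r hr).2.2
  have hchain := vl_chain (i₀ := i₀) hM2R (by omega) hmn hM0 hM2 hlne hlch hlhead hllast hWHb hNW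
  have hal : ∀ e ∈ edges (vL M2 c mn M0 i₀ l), Aligned e := fun e he =>
    (chain'_edges hchain he).1
  have havoid : ∀ e ∈ edges (vL M2 c mn M0 i₀ l), ∀ z ∈ segment ℝ e.1 e.2,
      ∀ wh ∈ whites m W (n+1), z ∉ cell M2 wh := fun e he => (chain'_edges hchain he).2
  have hcyc : (vL M2 c mn M0 i₀ l).head? = (vL M2 c mn M0 i₀ l).getLast? := vl_cyc
  have hnotΓ : ∀ z ∈ limitSet m W, z ∉ curveSet (vL M2 c mn M0 i₀ l) := by
    intro z hz hcontra
    obtain ⟨e, he, hseg⟩ := hcontra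
    have hlev := Set.mem_iInter.mp hz (n+1)
    rw [levelSet] at hlev
    simp only [Set.mem_iUnion] at hlev
    obtain ⟨p, hp, hcell⟩ := hlev
    exact havoid e he z hseg p hp hcell
  have hscale1 : ((c:ℝ))/M0 = ((c*mn : ℕ):ℝ)/(M2:ℝ) := by
    rw [hM2]
    push_cast
    have hmnR : (0:ℝ) < (mn:ℝ) := by exact_mod_cast (by omega : 0 < mn)
    field_simp
  have hscale2 : ((c:ℝ)+1)/M0 = ((c*mn+mn : ℕ):ℝ)/(M2:ℝ) := by
    rw [hM2]
    push_cast
    have hmnR : (0:ℝ) < (mn:ℝ) := by exact_mod_cast (by omega : 0 < mn)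
    field_simp
  have hRa : Rcnt (vL M2 c mn M0 i₀ l) a = 1 := by
    rw [Rcnt_eq_Ucnt a hcyc hal]
    exact vl_Ucnt_a hM2R hi₀ hM0 hlne hli ha1 (by rw [← hscale1]; exact hac) ha3 ha4
  have hRb : Rcnt (vL M2 c mn M0 i₀ l) b = 0 :=
    vl_Rcnt_b hM2R hi₀ hli (by rw [← hscale2]; exact hcb) (by linarith)
  set U := {z : ℝ × ℝ | z ∉ curveSet (vL M2 c mn M0 i₀ l) ∧ Rcnt (vL M2 c mn M0 i₀ l) z = 1}
    with hUdef
  have hUopen : IsOpen U := parity_region_open _ hcyc hal 1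
  have hVopen : IsOpen (closure U)ᶜ := isClosed_closure.isOpen_compl
  have hcover : t ⊆ U ∪ (closure U)ᶜ := by
    intro z hzt
    have hz := ht hzt
    have hzΓ := hnotΓ z hz
    rcases zmod2_dichot (Rcnt (vL M2 c mn M0 i₀ l) z) with h0 | h1
    · right
      exact not_mem_closure_parity _ hcyc hal hzΓ (by rw [h0]; decide)
    · left
      exact ⟨hzΓ, h1⟩
  have hnon := htc U (closure U)ᶜ hUopen hVopen hcover
    ⟨a, ha, hnotΓ a (ht ha), hRa⟩
    ⟨b, hb, not_mem_closure_parity _ hcyc hal (hnotΓ b (ht hb)) (by rw [hRb]; decide)⟩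
  obtain ⟨x, hxt, hxU, hxV⟩ := hnon
  exact hxV (subset_closure hxU)

/-! ### Walks and transposition -/

lemma walk_support_getLast {V : Type*} {G : SimpleGraph V} {u v : V} (w : G.Walk u v) :
    w.support.getLast? = some v := by
  induction w with
  | nil => rfl
  | @cons a b c h p ih =>
    rw [SimpleGraph.Walk.support_cons, List.getLast?_cons, ih]
    rfl

lemma exists_path (A : Set (ℕ × ℕ)) (hconn : (patternGraph A).Connected)
    {u v : ℕ × ℕ} (hu : u ∈ A) (hv : v ∈ A) :
    ∃ l : List (ℕ × ℕ), l ≠ [] ∧ l.Chain' SideAdj ∧ (∀ p ∈ l, p ∈ A) ∧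
      l.head? = some u ∧ l.getLast? = some v := by
  obtain ⟨w⟩ := hconn.preconnected ⟨u, hu⟩ ⟨v, hv⟩
  refine ⟨w.support.map Subtype.val, ?_, ?_, ?_, ?_, ?_⟩
  · simp [w.support_ne_nil]
  · unfold List.Chain'; rw [List.isChain_map]
    exact w.isChain_adj_support
  · intro p hp
    obtain ⟨x, hx, rfl⟩ := List.mem_map.mp hp
    exact x.2
  · rw [List.head?_map, w.support_eq_cons]
    rfl
  · rw [List.getLast?_map, walk_support_getLast]
    rfl

/-- Transpose of a family of patterns. -/
def swW (W : ℕ → Set (ℕ × ℕ)) : ℕ → Set (ℕ × ℕ) := fun k => {q | (q.2, q.1) ∈ W k}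

lemma swW_invol (W : ℕ → Set (ℕ × ℕ)) : swW (swW W) = W := by
  funext k
  rfl

lemma whites_sw (m : ℕ → ℕ) (W : ℕ → Set (ℕ × ℕ)) :
    ∀ n, ∀ p ∈ whites m W n, (p.2, p.1) ∈ whites m (swW W) n := by
  intro n
  induction n with
  | zero =>
    intro p hp
    simp only [whites, Set.mem_singleton_iff] at hp ⊢
    rw [hp]
  | succ n ih =>
    rintro p ⟨p₀, hp₀, r, hr, rfl⟩
    exact ⟨(p₀.2, p₀.1), ih p₀ hp₀, (r.2, r.1), hr, rfl⟩

lemma cell_sw {M : ℕ} {p : ℕ × ℕ} {z : ℝ × ℝ} (h : z ∈ cell M p) :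
    (z.2, z.1) ∈ cell M (p.2, p.1) := ⟨h.2, h.1⟩

lemma limitSet_sw (m : ℕ → ℕ) (W : ℕ → Set (ℕ × ℕ)) {z : ℝ × ℝ}
    (hz : z ∈ limitSet m W) : (z.2, z.1) ∈ limitSet m (swW W) := by
  rw [limitSet, Set.mem_iInter] at hz ⊢
  intro n
  have h := hz n
  rw [levelSet] at h ⊢
  simp only [Set.mem_iUnion] at h ⊢
  obtain ⟨p, hp, hc⟩ := h
  exact ⟨(p.2, p.1), whites_sw m W n p hp, cell_sw hc⟩

lemma sideAdj_sw {a b : ℕ × ℕ} (h : SideAdj a b) : SideAdj (a.2, a.1) (b.2, b.1) := by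
  rcases h with ⟨h1, h2⟩ | ⟨h1, h2⟩
  · exact Or.inr ⟨h1, h2⟩
  · exact Or.inl ⟨h1, h2⟩

end LabPf

/-FINAL-/
open Labyrinth in
/-- the limit set generated by the sequence of the complementary patterns
`𝒜̄_k = 𝒮_{m_k} \ 𝒜_k` of a sequence of labyrinth patterns is totally disconnected. -/
theorem complementary_limitSet_totallyDisconnected (m : ℕ → ℕ) (A : ℕ → Set (ℕ × ℕ))
    (hlab : ∀ k, IsLabyrinthPattern (m k) (A k)) :
    IsTotallyDisconnected
      (limitSet m (fun k => {p : ℕ × ℕ | p.1 < m k ∧ p.2 < m k} \ A k)) := by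
  classical
  intro t hts htpre x hx y hy
  by_contra hxy
  have hm : ∀ k, 3 ≤ m k := fun k => (hlab k).1
  set W : ℕ → Set (ℕ × ℕ) := fun k => {p : ℕ × ℕ | p.1 < m k ∧ p.2 < m k} \ A k with hW
  have hWg : ∀ k, ∀ p ∈ W k, p.1 < m k ∧ p.2 < m k := fun k p hp => hp.1
  have htr : ∀ k, ∃ (l : List (ℕ × ℕ)) (i₀ : ℕ),
      l ≠ [] ∧ l.Chain' Labyrinth.SideAdj ∧ (∀ p ∈ l, p.1 < m k ∧ p.2 < m k ∧ p ∉ W k) ∧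
      l.head? = some (i₀, 0) ∧ l.getLast? = some (i₀, m k - 1) := by
    intro k
    obtain ⟨h3, hpat, htree, hvert, hhor, hc1, hc2⟩ := hlab k
    obtain ⟨i₀, ⟨hv1, hv2⟩, -⟩ := hvert
    obtain ⟨lw, hne, hch, hmem, hhd, hlt⟩ := LabPf.exists_path (A k) htree.isConnected hv2 hv1
    refine ⟨lw, i₀, hne, hch, ?_, hhd, hlt⟩
    intro p hp
    exact ⟨(hpat.2 p (hmem p hp)).1, (hpat.2 p (hmem p hp)).2,
      fun hcon => hcon.2 (hmem p hp)⟩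
  have htr' : ∀ k, ∃ (l : List (ℕ × ℕ)) (i₀ : ℕ),
      l ≠ [] ∧ l.Chain' Labyrinth.SideAdj ∧
      (∀ p ∈ l, p.1 < m k ∧ p.2 < m k ∧ p ∉ LabPf.swW W k) ∧
      l.head? = some (i₀, 0) ∧ l.getLast? = some (i₀, m k - 1) := by
    intro k
    obtain ⟨h3, hpat, htree, hvert, hhor, hc1, hc2⟩ := hlab k
    obtain ⟨j₀, ⟨hh1, hh2⟩, -⟩ := hhor
    obtain ⟨lw, hne, hch, hmem, hhd, hlt⟩ := LabPf.exists_path (A k) htree.isConnected hh1 hh2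
    refine ⟨lw.map (fun q => (q.2, q.1)), j₀, by simpa using hne, ?_, ?_, ?_, ?_⟩
    · unfold List.Chain'; rw [List.isChain_map]
      exact hch.imp fun a b hab => LabPf.sideAdj_sw hab
    · intro p hp
      obtain ⟨q, hq, rfl⟩ := List.mem_map.mp hp
      exact ⟨(hpat.2 q (hmem q hq)).2, (hpat.2 q (hmem q hq)).1,
        fun hcon => hcon.2 (hmem q hq)⟩
    · rw [List.head?_map, hhd]
      rfl
    · rw [List.getLast?_map, hlt]
      rfl
  rcases eq_or_ne x.1 y.1 with he1 | hne1
  · have hne2 : x.2 ≠ y.2 := fun h2 => hxy (Prod.ext he1 h2)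
    have hts' : (fun z : ℝ × ℝ => (z.2, z.1)) '' t ⊆ limitSet m (LabPf.swW W) := by
      rintro _ ⟨z, hz, rfl⟩
      exact LabPf.limitSet_sw m W (hts hz)
    have htpre' : IsPreconnected ((fun z : ℝ × ℝ => (z.2, z.1)) '' t) :=
      htpre.image _ (Continuous.continuousOn (continuous_snd.prodMk continuous_fst))
    have hWg' : ∀ k, ∀ p ∈ LabPf.swW W k, p.1 < m k ∧ p.2 < m k := by
      intro k p hp
      exact ⟨hp.1.2, hp.1.1⟩
    have hx' : ((x.2, x.1) : ℝ × ℝ) ∈ (fun z : ℝ × ℝ => (z.2, z.1)) '' t := ⟨x, hx, rfl⟩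
    have hy' : ((y.2, y.1) : ℝ × ℝ) ∈ (fun z : ℝ × ℝ => (z.2, z.1)) '' t := ⟨y, hy, rfl⟩
    rcases lt_or_gt_of_ne hne2 with hlt | hgt
    · exact LabPf.vsep m (LabPf.swW W) hm hWg' htr' hts' htpre' hx' hy' hlt
    · exact LabPf.vsep m (LabPf.swW W) hm hWg' htr' hts' htpre' hy' hx' hgt
  · rcases lt_or_gt_of_ne hne1 with hlt | hgt
    · exact LabPf.vsep m W hm hWg htr hts htpre hx hy hlt
    · exact LabPf.vsep m W hm hWg htr hts htpre hy hx hgt
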